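/- (Deterministic descent inequality at the core of Lemma 2.) Let f_1, …, f_n : ℝ^d → ℝ be differentiable with L-Lipschitz gradients, and suppose f := (1/n)Σ_{i=1}^n f_i is μ-strongly convex with minimizer x*. Let x₁, …, x_n ∈ ℝ^d, x̄ = (1/n)Σ_i x_i, and ḡ = (1/n)Σ_i ∇f_i(x_i). Then for every α ≥ 0 and every index l ∈ {1,…,n}: ‖x̄ − α ḡ − x*‖² ≤ (1 − (μ/2)α)‖x̄ − x*‖² + α²‖ḡ‖² + 2α(f(x*) − f(x_l)) + α(L + 4L²/μ)‖x_l − x̄‖² + α(4L²/μ) Σ_{i=1}^n ‖x_i − x̄‖². -/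

import Mathlib

open scoped RealInnerProductSpace

section helpers
variable {E : Type*} [NormedAddCommGroup E] [InnerProductSpace ℝ E] [CompleteSpace E]

lemma inner_gradient_eq' (h : E → ℝ) (z v : E) : ⟪gradient h z, v⟫ = fderiv ℝ h z v := by
  rw [← InnerProductSpace.toDual_apply_apply, gradient, (InnerProductSpace.toDual ℝ E).apply_symm_apply]

lemma smooth_upper' (h : E → ℝ) (hd : Differentiable ℝ h) (L : ℝ)
    (hlip : ∀ a b, ‖gradient h a - gradient h b‖ ≤ L * ‖a - b‖) (a b : E) :
    h b ≤ h a + ⟪gradient h a, b - a⟫ + L / 2 * ‖b - a‖ ^ 2 := by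
  set v := b - a with hv
  set C : ℝ := ⟪gradient h a, v⟫ with hC
  set K : ℝ := L / 2 * ‖v‖ ^ 2 with hK
  set φ : ℝ → ℝ := fun t => h (a + t • v) - t * C - K * t ^ 2 with hφ
  have hder : ∀ t : ℝ, HasDerivAt φ (⟪gradient h (a + t • v), v⟫ - C - K * (2 * t)) t := by
    intro t
    have hc : HasDerivAt (fun t : ℝ => a + t • v) v t := by
      simpa using ((hasDerivAt_id t).smul_const v).const_add a
    have h1 : HasDerivAt (fun t : ℝ => h (a + t • v)) (fderiv ℝ h (a + t • v) v) t :=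
      (hd (a + t • v)).hasFDerivAt.comp_hasDerivAt t hc
    rw [← inner_gradient_eq'] at h1
    have h2 : HasDerivAt (fun t : ℝ => t * C) C t := hasDerivAt_mul_const C
    have h3 : HasDerivAt (fun t : ℝ => K * t ^ 2) (K * (2 * t)) t := by
      simpa using (hasDerivAt_pow 2 t).const_mul K
    exact (h1.sub h2).sub h3
  have hmono : AntitoneOn φ (Set.Icc 0 1) := by
    apply antitoneOn_of_deriv_nonpos (convex_Icc 0 1)
    · exact fun t _ => (hder t).differentiableAt.continuousAt.continuousWithinAt
    · exact fun t _ => (hder t).differentiableAt.differentiableWithinAt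
    · intro t ht
      rw [interior_Icc] at ht
      rw [(hder t).deriv]
      have h4 : ⟪gradient h (a + t • v) - gradient h a, v⟫ ≤ L * t * ‖v‖ ^ 2 := by
        calc ⟪gradient h (a + t • v) - gradient h a, v⟫
            ≤ ‖gradient h (a + t • v) - gradient h a‖ * ‖v‖ := real_inner_le_norm _ _
          _ ≤ (L * ‖(a + t • v) - a‖) * ‖v‖ :=
              mul_le_mul_of_nonneg_right (hlip _ _) (norm_nonneg v)
          _ = L * t * ‖v‖ ^ 2 := by
              rw [add_sub_cancel_left, norm_smul, Real.norm_eq_abs, abs_of_pos ht.1]; ring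
      rw [inner_sub_left] at h4
      rw [hC, hK]
      nlinarith [h4]
  have := hmono (Set.left_mem_Icc.2 zero_le_one) (Set.right_mem_Icc.2 zero_le_one) zero_le_one
  simp only [hφ] at this
  simp only [zero_smul, add_zero, zero_mul, sub_zero, one_smul, one_mul, mul_one,
    ne_eq, OfNat.ofNat_ne_zero, not_false_eq_true, zero_pow, mul_zero, one_pow] at this
  have hab : a + v = b := by rw [hv]; abel
  rw [hab] at this
  linarith
end helpers

set_option maxHeartbeats 1600000 in
/-- **Deterministic descent inequality at the core of Lemma 2.**
Let `f₁, …, f_n : ℝ^d → ℝ` be differentiable with `L`-Lipschitz gradients, and suppose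
`f := (1/n)∑ᵢ fᵢ` is `μ`-strongly convex with minimizer `x*`.  For `x₁, …, x_n`, set
`x̄ = (1/n)∑ᵢ xᵢ` and `ḡ = (1/n)∑ᵢ ∇fᵢ(xᵢ)`.  Then for every `α ≥ 0` and every `l`:
`‖x̄ − αḡ − x*‖² ≤ (1 − (μ/2)α)‖x̄ − x*‖² + α²‖ḡ‖² + 2α(f(x*) − f(x_l))
  + α(L + 4L²/μ)‖x_l − x̄‖² + α(4L²/μ) ∑ᵢ ‖xᵢ − x̄‖²`. -/
theorem descent_inequality
    (n d : ℕ) (hn : 0 < n) (μ L : ℝ) (hμ : 0 < μ) (hL : 0 < L)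
    (f : Fin n → EuclideanSpace ℝ (Fin d) → ℝ)
    (hdiff : ∀ i, Differentiable ℝ (f i))
    (hlip : ∀ i x y, ‖gradient (f i) x - gradient (f i) y‖ ≤ L * ‖x - y‖)
    (F : EuclideanSpace ℝ (Fin d) → ℝ) (hF : F = fun z => (n : ℝ)⁻¹ * ∑ i, f i z)
    (hsc : ∀ x y, μ / 2 * ‖x - y‖ ^ 2 ≤ F x - F y - ⟪gradient F y, x - y⟫)
    (xstar : EuclideanSpace ℝ (Fin d)) (hmin : ∀ x, F xstar ≤ F x)
    (x : Fin n → EuclideanSpace ℝ (Fin d))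
    (xbar gbar : EuclideanSpace ℝ (Fin d))
    (hxbar : xbar = (n : ℝ)⁻¹ • ∑ i, x i)
    (hgbar : gbar = (n : ℝ)⁻¹ • ∑ i, gradient (f i) (x i))
    (α : ℝ) (hα : 0 ≤ α) (l : Fin n) :
    ‖xbar - α • gbar - xstar‖ ^ 2 ≤
      (1 - μ / 2 * α) * ‖xbar - xstar‖ ^ 2 + α ^ 2 * ‖gbar‖ ^ 2 +
        2 * α * (F xstar - F (x l)) + α * (L + 4 * L ^ 2 / μ) * ‖x l - xbar‖ ^ 2 +
          α * (4 * L ^ 2 / μ) * ∑ i, ‖x i - xbar‖ ^ 2 := by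
  have hnR : (0:ℝ) < (n:ℝ) := by exact_mod_cast hn
  have hFd : Differentiable ℝ F := by
    rw [hF]
    exact Differentiable.const_mul (Differentiable.fun_sum fun i _ => hdiff i) _
  -- gradient of F
  have hG : ∀ z, gradient F z = (n : ℝ)⁻¹ • ∑ i, gradient (f i) z := by
    intro z
    have hfd : HasFDerivAt F ((n:ℝ)⁻¹ • ∑ i, fderiv ℝ (f i) z) z := by
      rw [hF]
      exact (HasFDerivAt.fun_sum (fun i _ => ((hdiff i) z).hasFDerivAt)).const_mul _
    rw [gradient, hfd.fderiv, map_smul, map_sum]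
    rfl
  -- Lipschitz gradient of F
  have hLipF : ∀ p q, ‖gradient F p - gradient F q‖ ≤ L * ‖p - q‖ := by
    intro p q
    rw [hG p, hG q, ← smul_sub, ← Finset.sum_sub_distrib]
    calc ‖(n:ℝ)⁻¹ • ∑ i, (gradient (f i) p - gradient (f i) q)‖
        = (n:ℝ)⁻¹ * ‖∑ i, (gradient (f i) p - gradient (f i) q)‖ := by
          rw [norm_smul, Real.norm_eq_abs, abs_of_pos (inv_pos.2 hnR)]
      _ ≤ (n:ℝ)⁻¹ * ∑ i, ‖gradient (f i) p - gradient (f i) q‖ :=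
          mul_le_mul_of_nonneg_left (norm_sum_le _ _) (le_of_lt (inv_pos.2 hnR))
      _ ≤ (n:ℝ)⁻¹ * ∑ _i : Fin n, (L * ‖p - q‖) :=
          mul_le_mul_of_nonneg_left (Finset.sum_le_sum fun i _ => hlip i p q)
            (le_of_lt (inv_pos.2 hnR))
      _ = L * ‖p - q‖ := by
          rw [Finset.sum_const, Finset.card_univ, Fintype.card_fin, nsmul_eq_mul]
          field_simp
  -- gradient at minimizer is zero
  have hG0 : gradient F xstar = 0 := by
    rw [gradient, IsLocalMin.fderiv_eq_zero (Filter.Eventually.of_forall hmin), map_zero]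
  -- error bound
  set A := ‖xbar - xstar‖ with hA
  set D := ‖x l - xbar‖ with hD
  set S := ∑ i, ‖x i - xbar‖ ^ 2 with hS
  set e := ‖gradient F xbar - gbar‖ with he
  have hSnn : 0 ≤ S := Finset.sum_nonneg fun i _ => sq_nonneg _
  have hEbound : e ^ 2 ≤ L ^ 2 * S := by
    have h1 : gradient F xbar - gbar
        = (n:ℝ)⁻¹ • ∑ i, (gradient (f i) xbar - gradient (f i) (x i)) := by
      rw [hG, hgbar, ← smul_sub, ← Finset.sum_sub_distrib]
    have h2 : e ≤ (n:ℝ)⁻¹ * (L * ∑ i, ‖x i - xbar‖) := by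
      rw [he, h1, norm_smul, Real.norm_eq_abs, abs_of_pos (inv_pos.2 hnR), Finset.mul_sum]
      refine mul_le_mul_of_nonneg_left ?_ (le_of_lt (inv_pos.2 hnR))
      refine le_trans (norm_sum_le _ _) (Finset.sum_le_sum fun i _ => ?_)
      rw [norm_sub_rev (x i) xbar]
      exact hlip i xbar (x i)
    have h3 : (∑ i, ‖x i - xbar‖) ^ 2 ≤ (n:ℝ) * S := by
      have := sq_sum_le_card_mul_sum_sq (s := (Finset.univ : Finset (Fin n)))
        (f := fun i => ‖x i - xbar‖)
      simpa [hS] using this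
    have h4 : e ^ 2 ≤ ((n:ℝ)⁻¹ * (L * ∑ i, ‖x i - xbar‖)) ^ 2 :=
      pow_le_pow_left₀ (norm_nonneg _) h2 2
    have h5 : ((n:ℝ)⁻¹ * (L * ∑ i, ‖x i - xbar‖)) ^ 2
        = (n:ℝ)⁻¹ * ((n:ℝ)⁻¹ * (L^2 * (∑ i, ‖x i - xbar‖)^2)) := by ring
    have h6 : (n:ℝ)⁻¹ * (L^2 * (∑ i, ‖x i - xbar‖)^2) ≤ L^2 * S := by
      rw [inv_mul_le_iff₀ hnR]
      calc L^2 * (∑ i, ‖x i - xbar‖)^2 ≤ L^2 * ((n:ℝ) * S) :=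
            mul_le_mul_of_nonneg_left h3 (sq_nonneg L)
        _ = (n:ℝ) * (L^2 * S) := by ring
    have h7 : (n:ℝ)⁻¹ * ((n:ℝ)⁻¹ * (L^2 * (∑ i, ‖x i - xbar‖)^2)) ≤ (n:ℝ)⁻¹ * (L^2 * S) :=
      mul_le_mul_of_nonneg_left h6 (le_of_lt (inv_pos.2 hnR))
    have h8 : (n:ℝ)⁻¹ * (L^2 * S) ≤ L^2 * S := by
      have h9 : (n:ℝ)⁻¹ ≤ 1 := by
        have h1n : (1:ℝ) ≤ (n:ℝ) := by exact_mod_cast hn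
        exact inv_le_one_of_one_le₀ h1n
      nlinarith [mul_nonneg (sq_nonneg L) hSnn]
    calc e^2 ≤ _ := h4
      _ = _ := h5
      _ ≤ _ := h7
      _ ≤ _ := h8
  -- strong convexity at (xstar, xbar)
  have key1 : F xbar - F xstar + μ/2 * A^2 ≤ ⟪gradient F xbar, xbar - xstar⟫ := by
    have := hsc xstar xbar
    have hn1 : ‖xstar - xbar‖ = A := by rw [hA, norm_sub_rev]
    have hn2 : ⟪gradient F xbar, xstar - xbar⟫ = -⟪gradient F xbar, xbar - xstar⟫ := by
      rw [← inner_neg_right, neg_sub]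
    rw [hn1, hn2] at this
    linarith
  -- smoothness at (xbar, x l)
  have key2 : F (x l) ≤ F xbar + ⟪gradient F xbar, x l - xbar⟫ + L/2 * D^2 :=
    smooth_upper' F hFd L hLipF xbar (x l)
  have key3 : ⟪gradient F xbar, x l - xbar⟫ ≤ L * A * D := by
    calc ⟪gradient F xbar, x l - xbar⟫ ≤ ‖gradient F xbar‖ * D := real_inner_le_norm _ _
      _ ≤ (L * A) * D := by
          refine mul_le_mul_of_nonneg_right ?_ (norm_nonneg _)
          have : ‖gradient F xbar‖ = ‖gradient F xbar - gradient F xstar‖ := by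
            rw [hG0, sub_zero]
          rw [this, hA]; exact hLipF xbar xstar
  have key4 : ⟪gradient F xbar - gbar, xbar - xstar⟫ ≤ e * A := by
    calc ⟪gradient F xbar - gbar, xbar - xstar⟫ ≤ e * ‖xbar - xstar‖ := real_inner_le_norm _ _
      _ = e * A := rfl
  have hJ : ⟪gbar, xbar - xstar⟫
      = ⟪gradient F xbar, xbar - xstar⟫ - ⟪gradient F xbar - gbar, xbar - xstar⟫ := by
    rw [inner_sub_left]; ring
  have expand : ‖xbar - α • gbar - xstar‖^2
      = A^2 - 2*α*⟪gbar, xbar - xstar⟫ + α^2*‖gbar‖^2 := by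
    have h0 : xbar - α • gbar - xstar = (xbar - xstar) - α • gbar := by abel
    rw [h0, norm_sub_sq_real, real_inner_smul_right, norm_smul, Real.norm_eq_abs, mul_pow,
      sq_abs, real_inner_comm]
    ring
  set ν := 4 * L^2 / μ with hν
  have hμν : μ * ν = 4 * L^2 := by
    rw [hν]; field_simp
  have young1 : 2*L*A*D ≤ μ/4*A^2 + ν*D^2 := by
    nlinarith [sq_nonneg (μ*A - 4*L*D), hμ, hμν, sq_nonneg A, sq_nonneg D]
  have young2 : 2*e*A ≤ μ/4*A^2 + ν*S := by
    nlinarith [sq_nonneg (μ*A - 4*e), hμ, hμν, hEbound, hSnn]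
  have main : -⟪gbar, xbar - xstar⟫
      ≤ (F xstar - F (x l)) + L*A*D + L/2*D^2 - μ/2*A^2 + e*A := by
    rw [hJ]; linarith
  have hm1 := mul_le_mul_of_nonneg_left young1 hα
  have hm2 := mul_le_mul_of_nonneg_left young2 hα
  have hm3 := mul_le_mul_of_nonneg_left main hα
  rw [expand]
  linarith [hm1, hm2, hm3]
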